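/- Let (f, τ, c) be degree −2 branched covering data with critical value v = f(c), and assume f is confluent. Let K ⊆ ℂ be a non-separating continuum. If v ∉ K, then f⁻¹(K) has exactly two connected components, these components are disjoint, and f restricted to each of them is a homeomorphism onto K. If v ∈ K, then f⁻¹(K) is connected (it is the unique pullback of K) and contains the critical point c. -/

import Mathlib

open Set Topology

/-- A continuum: a nonempty compact connected subset of ℂ. -/
def IsContinuum (K : Set ℂ) : Prop := IsCompact K ∧ IsConnected K

/-- `C` is a connected component of the set `S`. -/
def IsComponentOf (C S : Set ℂ) : Prop := ∃ x ∈ S, C = connectedComponentIn S x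

/-- A confluent map: each component of the preimage of a continuum maps onto it. -/
def Confluent (f : ℂ → ℂ) : Prop :=
  ∀ K C : Set ℂ, IsContinuum K → IsComponentOf C (f ⁻¹' K) → f '' C = K

open Complex in
noncomputable section
namespace PB
open Complex

def cl (x : ℝ) : ℝ := max 0 (min 1 x)
lemma cl_mem (x : ℝ) : cl x ∈ Icc (0:ℝ) 1 :=
  ⟨le_max_left _ _, max_le zero_le_one (min_le_left _ _)⟩
lemma cl_of_mem {x : ℝ} (h : x ∈ Icc (0:ℝ) 1) : cl x = x := by
  simp only [cl]; rw [min_eq_right h.2, max_eq_right h.1]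
lemma cl_zero : cl 0 = 0 := cl_of_mem ⟨le_refl _, zero_le_one⟩
lemma cl_one : cl 1 = 1 := cl_of_mem ⟨zero_le_one, le_refl _⟩
lemma cl_cl (x : ℝ) : cl (cl x) = cl x := cl_of_mem (cl_mem x)
lemma cl_of_nonpos {x : ℝ} (h : x ≤ 0) : cl x = 0 := by
  simp only [cl]; rw [min_eq_right (h.trans zero_le_one), max_eq_left h]
lemma cl_of_ge_one {x : ℝ} (h : 1 ≤ x) : cl x = 1 := by
  simp only [cl]; rw [min_eq_left h, max_eq_right zero_le_one]
lemma cl_min_one (x : ℝ) : cl (min x 1) = cl x := by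
  rcases le_total x 1 with h | h
  · rw [min_eq_left h]
  · rw [min_eq_right h, cl_one, cl_of_ge_one h]


lemma cl_lipschitz (a b : ℝ) : |cl a - cl b| ≤ |a - b| := by
  have h1 : |max 0 (min 1 a) - max 0 (min 1 b)| ≤ |min 1 a - min 1 b| := by
    simpa [max_comm] using abs_max_sub_max_le_abs (min 1 a) (min 1 b) 0
  have h2 : |min 1 a - min 1 b| ≤ |a - b| := by
    simpa using abs_min_sub_min_le_max (1:ℝ) a 1 b
  exact h1.trans h2
lemma continuous_cl : Continuous cl := by unfold cl; fun_prop

/-- continuous function into 2πiℤ on an interval is constant on the interval -/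
lemma int_valued_const {g : ℝ → ℂ} (hg : Continuous g) {a b : ℝ} (hab : a ≤ b)
    (h : ∀ x ∈ Icc a b, ∃ n : ℤ, g x = n * (2 * Real.pi * I)) : g a = g b := by
  have him : ∀ x ∈ Icc a b, ∃ n : ℤ, (g x).im = 2 * Real.pi * n := by
    intro x hx; obtain ⟨n, hn⟩ := h x hx
    refine ⟨n, ?_⟩
    rw [hn]; simp; ring
  -- imaginary parts are equal
  have him_eq : (g a).im = (g b).im := by
    by_contra hne
    have hconta : ContinuousOn (fun x => (g x).im) (Icc a b) :=
      (Complex.continuous_im.comp hg).continuousOn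
    obtain ⟨na, hna⟩ := him a ⟨le_refl _, hab⟩
    obtain ⟨nb, hnb⟩ := him b ⟨hab, le_refl _⟩
    have hpi := Real.pi_pos
    rcases lt_or_gt_of_ne hne with hlt | hlt
    · -- (g a).im < (g b).im ; na < nb
      have hnanb : na < nb := by
        by_contra hge
        push_neg at hge
        have : (2:ℝ) * Real.pi * nb ≤ 2 * Real.pi * na := by
          apply mul_le_mul_of_nonneg_left _ (by positivity)
          exact_mod_cast hge
        rw [hna, hnb] at hlt; linarith
      set y : ℝ := 2 * Real.pi * na + Real.pi with hy
      have hymem : y ∈ Icc ((g a).im) ((g b).im) := by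
        constructor
        · rw [hna]; linarith
        · rw [hnb]
          have : (na:ℝ) + 1 ≤ nb := by exact_mod_cast hnanb
          nlinarith
      obtain ⟨x, hxmem, hxval⟩ := intermediate_value_Icc hab hconta hymem
      obtain ⟨n, hn⟩ := him x hxmem
      simp only [] at hxval
      rw [hn] at hxval
      have : (2:ℝ) * n = 2 * na + 1 := by
        field_simp [hy] at hxval ⊢; nlinarith [hxval]
      have : (2 * n : ℤ) = 2 * na + 1 := by exact_mod_cast this
      omega
    · -- symmetric
      have hnanb : nb < na := by
        by_contra hge
        push_neg at hge
        have : (2:ℝ) * Real.pi * na ≤ 2 * Real.pi * nb := by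
          apply mul_le_mul_of_nonneg_left _ (by positivity)
          exact_mod_cast hge
        rw [hna, hnb] at hlt; linarith
      set y : ℝ := 2 * Real.pi * nb + Real.pi with hy
      have hymem : y ∈ Icc ((g b).im) ((g a).im) := by
        constructor
        · rw [hnb]; linarith
        · rw [hna]
          have : (nb:ℝ) + 1 ≤ na := by exact_mod_cast hnanb
          nlinarith
      obtain ⟨x, hxmem, hxval⟩ := intermediate_value_Icc' hab hconta hymem
      obtain ⟨n, hn⟩ := him x hxmem
      simp only [] at hxval
      rw [hn] at hxval
      have : (2:ℝ) * n = 2 * nb + 1 := by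
        field_simp [hy] at hxval ⊢; nlinarith [hxval]
      have : (2 * n : ℤ) = 2 * nb + 1 := by exact_mod_cast this
      omega
  obtain ⟨na, hna⟩ := h a ⟨le_refl _, hab⟩
  obtain ⟨nb, hnb⟩ := h b ⟨hab, le_refl _⟩
  have hnn : na = nb := by
    have h1 : (g a).im = 2 * Real.pi * na := by rw [hna]; simp; ring
    have h2 : (g b).im = 2 * Real.pi * nb := by rw [hnb]; simp; ring
    rw [h1, h2] at him_eq
    have hpi := Real.pi_pos
    have hcast : (na : ℝ) = nb := by
      have := mul_left_cancel₀ (by positivity : (2:ℝ) * Real.pi ≠ 0) him_eq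
      exact this
    exact_mod_cast hcast
  rw [hna, hnb, hnn]


lemma ratio_slit {z w : ℂ} (hw : w ≠ 0) (h : ‖z - w‖ < ‖w‖) : z / w ∈ slitPlane := by
  rw [Complex.mem_slitPlane_iff]
  left
  have h1 : ‖z / w - 1‖ < 1 := by
    rw [div_sub_one hw, norm_div]
    exact (div_lt_one (norm_pos_iff.mpr hw)).mpr h
  have h2 : |(z / w - 1).re| ≤ ‖z / w - 1‖ := Complex.abs_re_le_norm _
  have h3 : (z / w).re = 1 + (z / w - 1).re := by simp
  rw [h3]
  have := abs_le.mp h2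
  linarith [this.1]

/-- Helper: uniform slit-plane ratio bound for clamped maps. -/
lemma unif_ratio (H : ℝ × ℝ → ℂ) (hH : Continuous H) (h0 : ∀ p, H p ≠ 0)
    (hcl : ∀ s t : ℝ, H (s, t) = H (cl s, cl t)) :
    ∃ δ > (0:ℝ), ∀ p q : ℝ × ℝ, dist p q ≤ δ → H p / H q ∈ slitPlane := by
  set S : Set (ℝ × ℝ) := Icc (0:ℝ) 1 ×ˢ Icc (0:ℝ) 1 with hS
  have hScomp : IsCompact S := isCompact_Icc.prod isCompact_Icc
  have hSne : S.Nonempty := ⟨(0,0), ⟨⟨le_refl _, zero_le_one⟩, ⟨le_refl _, zero_le_one⟩⟩⟩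
  -- minimum of ‖H‖ on S
  obtain ⟨p₀, hp₀S, hp₀min⟩ := hScomp.exists_isMinOn hSne (hH.norm.continuousOn)
  set μ : ℝ := ‖H p₀‖ with hμdef
  have hμpos : 0 < μ := norm_pos_iff.mpr (h0 p₀)
  have hμle : ∀ p : ℝ × ℝ, μ ≤ ‖H p‖ := by
    intro p
    have : H p = H (cl p.1, cl p.2) := by rw [← hcl]
    rw [this]
    exact hp₀min ⟨cl_mem _, cl_mem _⟩
  -- uniform continuity on S
  have hUC : UniformContinuousOn H S := hScomp.uniformContinuousOn_of_continuous hH.continuousOn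
  rw [Metric.uniformContinuousOn_iff] at hUC
  obtain ⟨δ, hδpos, hδ⟩ := hUC μ hμpos
  refine ⟨δ/2, by positivity, ?_⟩
  intro p q hpq
  have hclp : (cl p.1, cl p.2) ∈ S := ⟨cl_mem _, cl_mem _⟩
  have hclq : (cl q.1, cl q.2) ∈ S := ⟨cl_mem _, cl_mem _⟩
  have hdist : dist (cl p.1, cl p.2) (cl q.1, cl q.2) ≤ dist p q := by
    rw [Prod.dist_eq, Prod.dist_eq]
    apply max_le_max
    · rw [Real.dist_eq, Real.dist_eq]; exact cl_lipschitz _ _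
    · rw [Real.dist_eq, Real.dist_eq]; exact cl_lipschitz _ _
  have hlt : dist (cl p.1, cl p.2) (cl q.1, cl q.2) < δ := lt_of_le_of_lt (hdist.trans hpq) (by linarith)
  have hnear := hδ _ hclp _ hclq hlt
  rw [dist_eq_norm] at hnear
  have hepq : H p = H (cl p.1, cl p.2) := by rw [← hcl]
  have heqq : H q = H (cl q.1, cl q.2) := by rw [← hcl]
  apply ratio_slit (h0 q)
  rw [hepq, heqq]
  exact lt_of_lt_of_le hnear ((hμle q).trans_eq (by rw [heqq]))


lemma min_sub_min_le {t a b : ℝ} (hab : a ≤ b) : |min t b - min t a| ≤ b - a := by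
  rcases le_total t a with h | h
  · rw [min_eq_left (h.trans hab), min_eq_left h]; simp; linarith
  · rcases le_total t b with h2 | h2
    · rw [min_eq_left h2, min_eq_right h, _root_.abs_of_nonneg (by linarith : (0:ℝ) ≤ t - a)]
      linarith
    · rw [min_eq_right h2, min_eq_right h, _root_.abs_of_nonneg (by linarith : (0:ℝ) ≤ b - a)]

lemma line_lift (g : ℝ → ℂ) (hg : Continuous g) (h0 : ∀ t, g t ≠ 0)
    (hcl : ∀ t, g t = g (cl t)) :
    ∃ l : ℝ → ℂ, Continuous l ∧ ∀ t, Complex.exp (l t) = g t := by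
  obtain ⟨δ, hδpos, hδ⟩ := unif_ratio (fun p => g p.2) (hg.comp continuous_snd)
    (fun p => h0 p.2) (fun s t => hcl t)
  obtain ⟨N, hN⟩ := exists_nat_gt (1/δ)
  have hNpos : 0 < (N:ℝ) := lt_trans (by positivity) hN
  have hstep : (1:ℝ)/N ≤ δ := by
    rw [div_le_iff₀ hNpos]
    rw [div_lt_iff₀ hδpos] at hN
    nlinarith
  have hratio : ∀ (a b t : ℝ), a ≤ b → b - a ≤ 1/N → g (min t b) / g (min t a) ∈ slitPlane := by
    intro a b t hab hba
    apply hδ (0, min t b) (0, min t a)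
    rw [Prod.dist_eq]
    simp only [dist_self, Real.dist_eq]
    refine max_le hδpos.le ((min_sub_min_le hab).trans (hba.trans hstep))
  have claim : ∀ i : ℕ, ∃ l : ℝ → ℂ, Continuous l ∧ ∀ t ≤ (i:ℝ)/N, Complex.exp (l t) = g t := by
    intro i
    induction i with
    | zero =>
      refine ⟨fun _ => Complex.log (g 0), continuous_const, ?_⟩
      intro t ht
      simp only [Nat.cast_zero, zero_div] at ht
      rw [Complex.exp_log (h0 0), hcl t, cl_of_nonpos ht, ← cl_zero, ← hcl 0]
    | succ i ih =>
      obtain ⟨l, hlcont, hl⟩ := ih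
      set a : ℝ := (i:ℝ)/N with ha
      set b : ℝ := (((i:ℕ)+1:ℕ):ℝ)/N with hb
      have hab : a ≤ b := by
        rw [ha, hb]
        gcongr
        push_cast; linarith
      have hba : b - a ≤ 1/N := by
        rw [ha, hb, div_sub_div_same]
        push_cast; ring_nf
        exact le_refl _
      refine ⟨fun t => l (min t a) + Complex.log (g (min t b) / g (min t a)), ?_, ?_⟩
      · apply Continuous.add
        · exact hlcont.comp (continuous_id.min continuous_const)
        · apply Continuous.clog
          · apply Continuous.div
            · exact hg.comp (continuous_id.min continuous_const)
            · exact hg.comp (continuous_id.min continuous_const)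
            · intro t; exact h0 _
          · intro t; exact hratio a b t hab hba
      · intro t ht
        rw [Complex.exp_add, hl (min t a) (min_le_right _ _),
          Complex.exp_log (div_ne_zero (h0 _) (h0 _)),
          mul_div_cancel₀ _ (h0 (min t a)), min_eq_left ht]
  obtain ⟨l, hlcont, hl⟩ := claim N
  refine ⟨fun t => l (min t 1), hlcont.comp (continuous_id.min continuous_const), ?_⟩
  intro t
  have h1 : min t 1 ≤ (N:ℝ)/N := by
    rw [div_self (ne_of_gt hNpos)]; exact min_le_right _ _
  rw [hl _ h1, hcl (min t 1), cl_min_one, ← hcl t]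

lemma sq_lift (H : ℝ × ℝ → ℂ) (hH : Continuous H) (h0 : ∀ p, H p ≠ 0)
    (hcl : ∀ s t : ℝ, H (s, t) = H (cl s, cl t)) :
    ∃ L : ℝ × ℝ → ℂ, Continuous L ∧ ∀ p, Complex.exp (L p) = H p := by
  obtain ⟨δ, hδpos, hδ⟩ := unif_ratio H hH h0 hcl
  obtain ⟨N, hN⟩ := exists_nat_gt (1/δ)
  have hNpos : 0 < (N:ℝ) := lt_trans (by positivity) hN
  have hstep : (1:ℝ)/N ≤ δ := by
    rw [div_le_iff₀ hNpos]
    rw [div_lt_iff₀ hδpos] at hN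
    nlinarith
  have hratio : ∀ (a b : ℝ) (s t : ℝ), a ≤ b → b - a ≤ 1/N →
      H (s, min t b) / H (s, min t a) ∈ slitPlane := by
    intro a b s t hab hba
    apply hδ (s, min t b) (s, min t a)
    rw [Prod.dist_eq]
    simp only [dist_self, Real.dist_eq]
    exact max_le hδpos.le ((min_sub_min_le hab).trans (hba.trans hstep))
  have claim : ∀ i : ℕ, ∃ L : ℝ × ℝ → ℂ, Continuous L ∧
      ∀ s t : ℝ, t ≤ (i:ℝ)/N → Complex.exp (L (s, t)) = H (s, t) := by
    intro i
    induction i with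
    | zero =>
      obtain ⟨l, hlcont, hl⟩ := line_lift (fun s => H (s, 0)) (by fun_prop)
        (fun s => h0 _) (fun s => by show H (s, 0) = H (cl s, 0); rw [hcl s 0, hcl (cl s) 0, cl_cl])
      refine ⟨fun p => l p.1, hlcont.comp continuous_fst, ?_⟩
      intro s t ht
      simp only [Nat.cast_zero, zero_div] at ht
      rw [hl s]
      rw [hcl s t, cl_of_nonpos ht, ← cl_zero, ← hcl s 0, cl_zero]
    | succ i ih =>
      obtain ⟨L, hLcont, hL⟩ := ih
      set a : ℝ := (i:ℝ)/N with ha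
      set b : ℝ := (((i:ℕ)+1:ℕ):ℝ)/N with hb
      have hab : a ≤ b := by
        rw [ha, hb]
        gcongr
        push_cast; linarith
      have hba : b - a ≤ 1/N := by
        rw [ha, hb, div_sub_div_same]
        push_cast; ring_nf
        exact le_refl _
      refine ⟨fun p => L (p.1, min p.2 a) +
        Complex.log (H (p.1, min p.2 b) / H (p.1, min p.2 a)), ?_, ?_⟩
      · apply Continuous.add
        · exact hLcont.comp (continuous_fst.prodMk (continuous_snd.min continuous_const))
        · apply Continuous.clog
          · apply Continuous.div
            · exact hH.comp (continuous_fst.prodMk (continuous_snd.min continuous_const))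
            · exact hH.comp (continuous_fst.prodMk (continuous_snd.min continuous_const))
            · intro p; exact h0 _
          · intro p; exact hratio a b p.1 p.2 hab hba
      · intro s t ht
        simp only
        rw [Complex.exp_add, hL s (min t a) (min_le_right _ _),
          Complex.exp_log (div_ne_zero (h0 _) (h0 _)),
          mul_div_cancel₀ _ (h0 (s, min t a)), min_eq_left ht]
  obtain ⟨L, hLcont, hL⟩ := claim N
  refine ⟨fun p => L (p.1, min p.2 1),
    hLcont.comp (continuous_fst.prodMk (continuous_snd.min continuous_const)), ?_⟩
  intro p
  have h1 : min p.2 1 ≤ (N:ℝ)/N := by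
    rw [div_self (ne_of_gt hNpos)]; exact min_le_right _ _
  rw [hL _ _ h1, hcl p.1 (min p.2 1), cl_min_one, ← hcl p.1 p.2]

/-- The key topological obstruction: a bounded connected open set, invariant under a
free-off-`c` involution `τ` and avoiding `c`, separates `c` from infinity. -/
lemma crux (τ : ℂ → ℂ) (c : ℂ) (hτ : Continuous τ) (hττ : ∀ x, τ (τ x) = x)
    (hcuniq : ∀ x, τ x = x → x = c)
    (G : Set ℂ) (hGopen : IsOpen G) (hGconn : IsConnected G)
    (hGτ : ∀ z ∈ G, τ z ∈ G) (hcG : c ∉ G)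
    (x₀ : ℂ) (hx₀ : x₀ ∈ G)
    (ρ : ℝ) (hGρ : ∀ z ∈ G, ‖z‖ < ρ)
    (γ : ℝ → ℂ) (hγ : Continuous γ) (hγcl : ∀ t, γ t = γ (cl t))
    (hγ0 : γ 0 = c) (hγ1 : ρ < ‖γ 1‖) (hγG : ∀ t, γ t ∉ G) : False := by
  -- a path from x₀ to τ x₀ inside G
  have hGpath : IsPathConnected G := (hGopen.isConnected_iff_isPathConnected).mp hGconn
  have hJ : JoinedIn G x₀ (τ x₀) := hGpath.joinedIn x₀ hx₀ (τ x₀) (hGτ x₀ hx₀)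
  set α : Path x₀ (τ x₀) := hJ.somePath with hα
  have hαmem : ∀ u : ℝ, α.extend u ∈ G := by
    intro u
    rcases le_total u 0 with h | h
    · rw [Path.extend_of_le_zero _ h]; exact hx₀
    · rcases le_total u 1 with h2 | h2
      · rw [Path.extend_apply _ ⟨h, h2⟩]; exact hJ.somePath_mem _
      · rw [Path.extend_of_one_le _ h2]; exact hGτ x₀ hx₀
  -- the symmetric loop
  set A : ℝ → ℂ := fun t => if t ≤ 1/2 then α.extend (2*t) else τ (α.extend (2*t - 1)) with hAdef
  have hAcont : Continuous A := by
    apply Continuous.if_le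
    · exact α.continuous_extend.comp (by fun_prop)
    · exact hτ.comp (α.continuous_extend.comp (by fun_prop))
    · exact continuous_id
    · exact continuous_const
    · intro x hx
      rw [hx]
      norm_num
  have hAmem : ∀ t, A t ∈ G := by
    intro t
    by_cases h : t ≤ 1/2 <;> simp only [hAdef, h, if_true, if_false]
    · exact hαmem _
    · exact hGτ _ (hαmem _)
  have hA0 : A 0 = x₀ := by
    simp only [hAdef]
    norm_num
  have hA1 : A 1 = x₀ := by
    have h3 : ¬ ((1:ℝ) ≤ 1/2) := by norm_num
    simp only [hAdef, if_neg h3]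
    have e1 : (2:ℝ) * 1 - 1 = 1 := by norm_num
    rw [e1, Path.extend_one]
    exact hττ x₀
  have hAcl : ∀ t, A t = A (cl t) := by
    intro t
    rcases le_total t 0 with h | h
    · rw [cl_of_nonpos h]
      simp only [hAdef, if_pos (by linarith : t ≤ 1/2), if_pos (by norm_num : (0:ℝ) ≤ 1/2)]
      rw [Path.extend_of_le_zero _ (by linarith), mul_zero, Path.extend_of_le_zero _ le_rfl]
    · rcases le_total t 1 with h2 | h2
      · rw [cl_of_mem ⟨h, h2⟩]
      · rw [cl_of_ge_one h2, hA1]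
        have h3 : ¬ (t ≤ 1/2) := by linarith
        simp only [hAdef, if_neg h3]
        rw [Path.extend_of_one_le _ (by linarith)]
        exact hττ x₀
  have hAsym : ∀ t, 0 ≤ t → t ≤ 1/2 → A (t + 1/2) = τ (A t) := by
    intro t h0t ht
    rcases eq_or_lt_of_le h0t with h | h
    · rw [← h, zero_add]
      have e1 : (2:ℝ) * (1/2) = 1 := by norm_num
      have e0 : (2:ℝ) * 0 = 0 := by norm_num
      simp only [hAdef, if_pos (le_refl (1/2:ℝ)), if_pos (by norm_num : (0:ℝ) ≤ 1/2)]
      rw [e1, e0, Path.extend_one, Path.extend_zero]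
    · have h1 : ¬ (t + 1/2 ≤ 1/2) := by linarith
      simp only [hAdef, if_neg h1, if_pos ht]
      congr 1
      ring_nf
  -- basic nonvanishing facts
  have hAne_c : ∀ t, A t ≠ c := fun t h => hcG (h ▸ hAmem t)
  have hτA : ∀ t : ℝ, A t - τ (A t) ≠ 0 := by
    intro t h
    exact hAne_c t (hcuniq _ (sub_eq_zero.mp h).symm)
  -- first lift : logarithm of A t - γ s
  set H₁ : ℝ × ℝ → ℂ := fun p => A p.2 - γ p.1 with hH₁
  have hH₁cont : Continuous H₁ := (hAcont.comp continuous_snd).sub (hγ.comp continuous_fst)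
  have hH₁0 : ∀ p, H₁ p ≠ 0 := by
    intro p h
    have h2 : A p.2 = γ p.1 := sub_eq_zero.mp h
    exact hγG p.1 (h2 ▸ hAmem p.2)
  have hH₁cl : ∀ s t : ℝ, H₁ (s,t) = H₁ (cl s, cl t) := by
    intro s t
    simp only [hH₁]
    rw [← hAcl t, ← hγcl s]
  obtain ⟨L, hLcont, hL⟩ := sq_lift H₁ hH₁cont hH₁0 hH₁cl
  have hLexp : ∀ s t : ℝ, Complex.exp (L (s,t)) = A t - γ s := fun s t => hL (s,t)
  -- F s = L(s,1) - L(s,0) takes values in 2πiℤ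
  have hFval : ∀ s : ℝ, ∃ n : ℤ, L (s,1) - L (s,0) = n * (2 * Real.pi * I) := by
    intro s
    rw [← Complex.exp_eq_one_iff, Complex.exp_sub, hLexp, hLexp, hA1, hA0]
    have hne : x₀ - γ s ≠ 0 := by rw [← hA0]; exact hH₁0 (s,0)
    exact div_self hne
  -- the explicit lift at s = 1 : A t - w with w = γ 1 far away
  set w : ℂ := γ 1 with hw
  have hρpos : 0 < ρ := lt_of_le_of_lt (norm_nonneg x₀) (hGρ x₀ hx₀)
  have hwn : ρ < ‖w‖ := hγ1
  have hw0 : w ≠ 0 := by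
    intro h
    rw [h] at hwn
    simp at hwn
    linarith
  have hAw : ∀ t : ℝ, ‖A t / w‖ < 1 := by
    intro t
    rw [norm_div, div_lt_one (by linarith [norm_nonneg w] : (0:ℝ) < ‖w‖)]
    exact (hGρ _ (hAmem t)).trans hwn
  have hslit : ∀ t : ℝ, 1 - A t / w ∈ slitPlane := by
    intro t
    rw [sub_eq_add_neg]
    exact Complex.mem_slitPlane_of_norm_lt_one (by simpa using hAw t)
  have h1Aw : ∀ t : ℝ, 1 - A t / w ≠ 0 := fun t => slitPlane_ne_zero (hslit t)
  set n : ℝ → ℂ := fun t => Complex.log (-w) + Complex.log (1 - A t / w) with hn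
  have hncont : Continuous n := by
    apply Continuous.add continuous_const
    apply Continuous.clog
    · fun_prop
    · exact hslit
  have hnexp : ∀ t : ℝ, Complex.exp (n t) = A t - w := by
    intro t
    rw [Complex.exp_add, Complex.exp_log (neg_ne_zero.mpr hw0), Complex.exp_log (h1Aw t)]
    field_simp
    ring
  -- compare L(1,·) with n : difference is constant, so L(1,1) - L(1,0) = n 1 - n 0 = 0
  have hdiff : ∀ x ∈ Icc (0:ℝ) 1, ∃ k : ℤ, (L (1,x) - n x) = k * (2 * Real.pi * I) := by
    intro x _
    rw [← Complex.exp_eq_one_iff, Complex.exp_sub, hLexp, hnexp, ← hw]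
    exact div_self (by rw [← hnexp x]; exact Complex.exp_ne_zero _)
  have hF1 : L (1,1) - L (1,0) = 0 := by
    have hc := int_valued_const ((hLcont.comp (continuous_const.prodMk continuous_id)).sub hncont)
      zero_le_one hdiff
    have hn10 : n 1 = n 0 := by simp only [hn, hA1, hA0]
    have : L (1,1) - n 1 = L (1,0) - n 0 := by
      simpa using hc.symm
    rw [hn10] at this
    have h2 : L (1,1) = L (1,0) := sub_left_inj.mp this
    rw [h2, sub_self]
  -- hence the s = 0 lift l := L(0,·) of A - c is closed
  have hFcont : Continuous (fun s : ℝ => L (s,1) - L (s,0)) :=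
    (hLcont.comp (continuous_id.prodMk continuous_const)).sub
      (hLcont.comp (continuous_id.prodMk continuous_const))
  have hF0 : L ((0:ℝ),(1:ℝ)) - L (0,0) = 0 := by
    have hc := int_valued_const hFcont zero_le_one (fun x _ => hFval x)
    rw [hc]; exact hF1
  set l : ℝ → ℂ := fun t => L (0,t) with hldef
  have hlcont : Continuous l := hLcont.comp (continuous_const.prodMk continuous_id)
  have hlexp : ∀ t, Complex.exp (l t) = A t - c := by
    intro t
    simp only [hldef]
    rw [hLexp 0 t, hγ0]
  have hl10 : l 1 = l 0 := sub_eq_zero.mp hF0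
  -- second lift : logarithm of Q p - τ (Q p) where Q contracts the loop A in ℂ \ {c}
  set Q : ℝ × ℝ → ℂ := fun p =>
    c + Complex.exp ((1 - ((cl p.1 : ℝ) : ℂ)) * l (cl p.2) + ((cl p.1 : ℝ) : ℂ) * l 0) with hQdef
  have hclC : Continuous fun p : ℝ × ℝ => ((cl p.1 : ℝ) : ℂ) :=
    Complex.continuous_ofReal.comp (continuous_cl.comp continuous_fst)
  have hQcont : Continuous Q := by
    apply continuous_const.add
    apply Complex.continuous_exp.comp
    exact ((continuous_const.sub hclC).mul
      (hlcont.comp (continuous_cl.comp continuous_snd))).add (hclC.mul continuous_const)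
  have hQne : ∀ p, Q p ≠ c := by
    intro p h
    have h2 : Complex.exp ((1 - ((cl p.1 : ℝ) : ℂ)) * l (cl p.2) + ((cl p.1 : ℝ) : ℂ) * l 0) = 0 := by
      have := sub_eq_zero.mpr h
      rw [hQdef] at h
      linear_combination h
    exact Complex.exp_ne_zero _ h2
  set Λ : ℝ × ℝ → ℂ := fun p => Q p - τ (Q p) with hΛdef
  have hΛ0 : ∀ p, Λ p ≠ 0 := fun p h => hQne p (hcuniq _ (sub_eq_zero.mp h).symm)
  have hΛcont : Continuous Λ := hQcont.sub (hτ.comp hQcont)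
  have hΛcl : ∀ s t : ℝ, Λ (s,t) = Λ (cl s, cl t) := by
    intro s t
    simp only [hΛdef, hQdef, cl_cl]
  obtain ⟨M, hMcont, hM⟩ := sq_lift Λ hΛcont hΛ0 hΛcl
  have hQ0t : ∀ t, Q (0,t) = A (cl t) := by
    intro t
    simp only [hQdef, cl_zero]
    push_cast
    rw [sub_zero, one_mul, zero_mul, add_zero, hlexp (cl t)]
    ring
  have hMexp0 : ∀ t, Complex.exp (M (0,t)) = A (cl t) - τ (A (cl t)) := by
    intro t
    rw [hM (0,t)]
    simp only [hΛdef]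
    rw [hQ0t]
  have hQs10 : ∀ s : ℝ, Q (s,1) = Q (s,0) := by
    intro s
    simp only [hQdef, cl_one, cl_zero]
    rw [hl10]
  have hGval : ∀ s : ℝ, ∃ k : ℤ, M (s,1) - M (s,0) = k * (2 * Real.pi * I) := by
    intro s
    rw [← Complex.exp_eq_one_iff, Complex.exp_sub, hM, hM]
    simp only [hΛdef]
    rw [hQs10 s]
    exact div_self (hΛ0 (s,0))
  have hGcont : Continuous (fun s : ℝ => M (s,1) - M (s,0)) :=
    (hMcont.comp (continuous_id.prodMk continuous_const)).sub
      (hMcont.comp (continuous_id.prodMk continuous_const))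
  have hG1 : M ((1:ℝ),(1:ℝ)) - M (1,0) = 0 := by
    have hQ1t : ∀ t, Q (1,t) = Q (1,0) := by
      intro t
      simp only [hQdef, cl_one]
      push_cast
      ring_nf
    have hval : ∀ x ∈ Icc (0:ℝ) 1, ∃ k : ℤ, (M (1,x) - M (1,0)) = k * (2 * Real.pi * I) := by
      intro x _
      rw [← Complex.exp_eq_one_iff, Complex.exp_sub, hM, hM]
      simp only [hΛdef]
      rw [hQ1t x]
      exact div_self (hΛ0 (1,0))
    have hgc : Continuous (fun x : ℝ => M (1,x) - M (1,0)) :=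
      (hMcont.comp (continuous_const.prodMk continuous_id)).sub continuous_const
    have := (int_valued_const hgc zero_le_one hval).symm
    simpa using this
  have hG0 : M ((0:ℝ),(1:ℝ)) - M (0,0) = 0 := by
    have hc := int_valued_const hGcont zero_le_one (fun x _ => hGval x)
    rw [hc]; exact hG1
  set m : ℝ → ℂ := fun t => M (0,t) with hmdef
  have hm10 : m 1 = m 0 := sub_eq_zero.mp hG0
  set d : ℝ → ℂ := fun t => m (t + 1/2) - m t with hddef
  have hdcont : Continuous d :=
    ((hMcont.comp (continuous_const.prodMk (continuous_id.add continuous_const)))).sub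
      (hMcont.comp (continuous_const.prodMk continuous_id))
  have hexp_d : ∀ t ∈ Icc (0:ℝ) (1/2), Complex.exp (d t) = -1 := by
    rintro t ⟨h0t, ht⟩
    have hcl1 : cl (t + 1/2) = t + 1/2 := cl_of_mem ⟨by linarith, by linarith⟩
    have hcl2 : cl t = t := cl_of_mem ⟨h0t, by linarith⟩
    simp only [hddef, hmdef]
    rw [Complex.exp_sub, hMexp0, hMexp0, hcl1, hcl2, hAsym t h0t ht, hττ]
    rw [← neg_sub (A t) (τ (A t)), neg_div, div_self (hτA t)]
  have hdval : ∀ x ∈ Icc (0:ℝ) (1/2), ∃ k : ℤ, d x - Real.pi * I = k * (2 * Real.pi * I) := by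
    intro x hx
    rw [← Complex.exp_eq_one_iff, Complex.exp_sub, hexp_d x hx, Complex.exp_pi_mul_I]
    norm_num
  have hdconst := int_valued_const (hdcont.sub continuous_const) (by norm_num : (0:ℝ) ≤ 1/2)
    hdval
  have hd_eq : d 0 = d (1/2) := by
    have h2 : d 0 - Real.pi * I = d (1/2) - Real.pi * I := by simpa using hdconst
    linear_combination h2
  have hsum : d 0 + d (1/2) = 0 := by
    simp only [hddef]
    have e1 : (0:ℝ) + 1/2 = 1/2 := by norm_num
    have e2 : (1:ℝ)/2 + 1/2 = 1 := by norm_num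
    rw [e1, e2, hm10]
    ring
  have hd0 : d 0 = 0 := by
    rw [← hd_eq] at hsum
    linear_combination hsum / 2
  have he := hexp_d 0 ⟨le_rfl, by norm_num⟩
  rw [hd0, Complex.exp_zero] at he
  norm_num at he

/-- image of a connected component under the involution -/
lemma tau_image_sub (τ : ℂ → ℂ) (hτ : Continuous τ)
    (X : Set ℂ) (hXτ : ∀ z ∈ X, τ z ∈ X) (x : ℂ) (hx : x ∈ X) :
    τ '' connectedComponentIn X x ⊆ connectedComponentIn X (τ x) := by
  apply IsPreconnected.subset_connectedComponentIn
  · exact (isPreconnected_connectedComponentIn).image τ hτ.continuousOn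
  · exact mem_image_of_mem τ (mem_connectedComponentIn hx)
  · rintro y ⟨z, hz, rfl⟩
    exact hXτ z (connectedComponentIn_subset X x hz)

lemma tau_image_component (τ : ℂ → ℂ) (hτ : Continuous τ) (hττ : ∀ x, τ (τ x) = x)
    (X : Set ℂ) (hXτ : ∀ z ∈ X, τ z ∈ X) (x : ℂ) (hx : x ∈ X) :
    τ '' connectedComponentIn X x = connectedComponentIn X (τ x) := by
  apply Subset.antisymm (tau_image_sub τ hτ X hXτ x hx)
  have h2 := tau_image_sub τ hτ X hXτ (τ x) (hXτ x hx)
  rw [hττ x] at h2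
  have h3 := image_mono (f := τ) h2
  rw [image_image] at h3
  have h4 : (fun a => τ (τ a)) '' connectedComponentIn X (τ x)
      = connectedComponentIn X (τ x) := by
    have : (fun a => τ (τ a)) = id := funext fun a => hττ a
    rw [this, image_id]
  rw [h4] at h3
  exact h3

/-- components of compact sets are compact -/
lemma comp_compact {X : Set ℂ} (hX : IsCompact X) (x : ℂ) :
    IsCompact (connectedComponentIn X x) := by
  by_cases hx : x ∈ X
  · have hclosed : IsClosed (connectedComponentIn X x) := by
      have hsub : closure (connectedComponentIn X x) ⊆ connectedComponentIn X x := by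
        apply IsPreconnected.subset_connectedComponentIn
        · exact (isPreconnected_connectedComponentIn).subset_closure subset_closure Subset.rfl
        · exact subset_closure (mem_connectedComponentIn hx)
        · exact (closure_minimal (connectedComponentIn_subset X x) hX.isClosed)
      exact isClosed_of_closure_subset hsub
    exact hX.of_isClosed_subset hclosed (connectedComponentIn_subset X x)
  · rw [connectedComponentIn_eq_empty hx]; exact isCompact_empty

/-- The connected preimage lemma: the preimage of an open connected set containing the
critical value is connected. -/
lemma preimage_open_connected (f τ : ℂ → ℂ) (c : ℂ) (hf : Continuous f) (hopen : IsOpenMap f)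
    (hperfect : ∀ K : Set ℂ, IsCompact K → IsCompact (f ⁻¹' K))
    (hfib : ∀ x y : ℂ, f x = f y → y = x ∨ y = τ x) (hc : τ c = c)
    (U : Set ℂ) (hUopen : IsOpen U) (hUconn : IsConnected U) (hvU : f c ∈ U) :
    IsConnected (f ⁻¹' U) := by
  have hWopen : IsOpen (f ⁻¹' U) := hUopen.preimage hf
  have hcW : c ∈ f ⁻¹' U := hvU
  -- every component of f⁻¹' U contains c
  have hkey : ∀ z ∈ f ⁻¹' U, c ∈ connectedComponentIn (f ⁻¹' U) z := by
    intro z hz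
    set C := connectedComponentIn (f ⁻¹' U) z with hC
    have hCopen : IsOpen C := hWopen.connectedComponentIn
    have hCne : z ∈ C := mem_connectedComponentIn hz
    have hfCopen : IsOpen (f '' C) := hopen C hCopen
    have hfCsub : f '' C ⊆ U := by
      rintro y ⟨u, hu, rfl⟩
      exact connectedComponentIn_subset (f ⁻¹' U) z hu
    -- closure trick : U ∩ closure (f '' C) ⊆ f '' C
    have hclosure : U ∩ closure (f '' C) ⊆ f '' C := by
      rintro y ⟨hyU, hyc⟩
      set P := f ⁻¹' (Metric.closedBall y 1) with hP
      have hPcomp : IsCompact P := hperfect _ (isCompact_closedBall y 1)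
      have hycl2 : y ∈ closure (f '' (C ∩ P)) := by
        rw [mem_closure_iff] at hyc ⊢
        intro O hO hyO
        obtain ⟨p, ⟨hpO, hpball⟩, ⟨u, huC, hup⟩⟩ :=
          hyc (O ∩ Metric.ball y 1) (hO.inter Metric.isOpen_ball)
            ⟨hyO, Metric.mem_ball_self one_pos⟩
        refine ⟨p, hpO, u, ⟨huC, ?_⟩, hup⟩
        simp only [hP, mem_preimage, hup]
        exact Metric.ball_subset_closedBall hpball
      have hTcomp : IsCompact (f '' (closure C ∩ P)) :=
        ((hPcomp.inter_left isClosed_closure).image hf)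
      have hsub2 : f '' (C ∩ P) ⊆ f '' (closure C ∩ P) :=
        image_mono (f := f) (inter_subset_inter_left P subset_closure)
      have hymem : y ∈ f '' (closure C ∩ P) :=
        (closure_minimal hsub2 hTcomp.isClosed) hycl2
      obtain ⟨x, ⟨hxcl, _⟩, hxy⟩ := hymem
      have hxW : x ∈ f ⁻¹' U := by
        simp only [mem_preimage, hxy]; exact hyU
      -- x is in the closure of C and in f⁻¹' U, hence in C
      have hxC : x ∈ C := by
        have hconn : IsPreconnected (C ∪ {x}) := by
          apply (isPreconnected_connectedComponentIn).subset_closure subset_union_left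
          rw [union_subset_iff]
          exact ⟨subset_closure, singleton_subset_iff.mpr hxcl⟩
        have hsubU : C ∪ {x} ⊆ f ⁻¹' U :=
          union_subset (connectedComponentIn_subset _ _) (singleton_subset_iff.mpr hxW)
        have := hconn.subset_connectedComponentIn (mem_union_left _ hCne) hsubU
        have h2 : C ∪ {x} ⊆ C := by rw [hC]; exact this
        exact h2 (mem_union_right _ rfl)
      exact ⟨x, hxC, hxy⟩
    -- f '' C is clopen in U, so f '' C = U
    have hUsub : U ⊆ f '' C := by
      by_contra hne
      obtain ⟨y₀, hy₀U, hy₀⟩ := not_subset.mp hne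
      have hcover : U ⊆ f '' C ∪ (closure (f '' C))ᶜ := by
        intro u hu
        by_cases h : u ∈ closure (f '' C)
        · exact Or.inl (hclosure ⟨hu, h⟩)
        · exact Or.inr h
      have hne1 : (U ∩ f '' C).Nonempty := ⟨f z, ⟨hfCsub ⟨z, hCne, rfl⟩, z, hCne, rfl⟩⟩
      have hne2 : (U ∩ (closure (f '' C))ᶜ).Nonempty := by
        refine ⟨y₀, hy₀U, ?_⟩
        intro hmem
        exact hy₀ (hclosure ⟨hy₀U, hmem⟩)
      obtain ⟨p, _, hp1, hp2⟩ := hUconn.isPreconnected (f '' C) (closure (f '' C))ᶜ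
        hfCopen (isClosed_closure).isOpen_compl hcover hne1 hne2
      exact hp2 (subset_closure hp1)
    -- v ∈ f '' C gives c ∈ C
    obtain ⟨p, hpC, hpv⟩ := hUsub hvU
    rcases hfib c p hpv.symm with h | h
    · rw [← h]; exact hpC
    · rw [hc] at h; rw [← h]; exact hpC
  refine ⟨⟨c, hcW⟩, ?_⟩
  have hXeq : f ⁻¹' U = connectedComponentIn (f ⁻¹' U) c := by
    apply Subset.antisymm
    · intro z hz
      have h1 := hkey z hz
      have h2 : connectedComponentIn (f ⁻¹' U) z = connectedComponentIn (f ⁻¹' U) c :=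
        connectedComponentIn_eq h1
      rw [← h2]
      exact mem_connectedComponentIn hz
    · exact connectedComponentIn_subset _ _
  rw [hXeq]
  exact isPreconnected_connectedComponentIn


lemma path_extend_cl {a b : ℂ} (p : Path a b) (t : ℝ) : p.extend t = p.extend (cl t) := by
  rcases le_total t 0 with h | h
  · rw [cl_of_nonpos h, Path.extend_of_le_zero _ h, Path.extend_of_le_zero _ le_rfl]
  · rcases le_total t 1 with h2 | h2
    · rw [cl_of_mem ⟨h, h2⟩]
    · rw [cl_of_ge_one h2, Path.extend_of_one_le _ h2, Path.extend_of_one_le _ le_rfl]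

lemma build_homeo (f : ℂ → ℂ) (hf : Continuous f) (A K : Set ℂ) (hA : IsCompact A)
    (hfA : f '' A = K) (hinj : InjOn f A) : ∃ e : A ≃ₜ K, ∀ a : A, (e a : ℂ) = f a := by
  haveI : CompactSpace A := isCompact_iff_compactSpace.mp hA
  have hmem : ∀ a : A, f a ∈ K := fun a => hfA ▸ mem_image_of_mem f a.2
  set em : A → K := fun a => ⟨f a, hmem a⟩ with hem
  have hbij : Function.Bijective em := by
    constructor
    · intro a b hab
      apply Subtype.ext
      apply hinj a.2 b.2
      simpa [hem, Subtype.ext_iff] using hab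
    · intro k
      have : (k : ℂ) ∈ f '' A := hfA.symm ▸ k.2
      obtain ⟨a, haA, hak⟩ := this
      exact ⟨⟨a, haA⟩, Subtype.ext hak⟩
  set e := Equiv.ofBijective em hbij with he
  have hcont : Continuous e := Continuous.subtype_mk (hf.comp continuous_subtype_val) _
  exact ⟨hcont.homeoOfEquivCompactToT2, fun a => rfl⟩


end PB
end

open PB

theorem pullbacks_of_nonseparating_continuum
    (f τ : ℂ → ℂ) (c : ℂ)
    (hf : Continuous f) (hopen : IsOpenMap f)
    (hperfect : ∀ K : Set ℂ, IsCompact K → IsCompact (f ⁻¹' K))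
    (hτ : Continuous τ) (hττ : ∀ x, τ (τ x) = x) (hfτ : ∀ x, f (τ x) = f x)
    (hfib : ∀ x y, f x = f y → y = x ∨ y = τ x)
    (hc : τ c = c) (hcuniq : ∀ x, τ x = x → x = c)
    (hconf : Confluent f)
    (K : Set ℂ) (hK : IsContinuum K) (hKns : IsConnected Kᶜ) :
    (f c ∉ K →
      ∃ A B : Set ℂ, IsComponentOf A (f ⁻¹' K) ∧ IsComponentOf B (f ⁻¹' K) ∧
        A ≠ B ∧ Disjoint A B ∧ A ∪ B = f ⁻¹' K ∧
        (∃ eA : A ≃ₜ K, ∀ a : A, (eA a : ℂ) = f a) ∧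
        (∃ eB : B ≃ₜ K, ∀ b : B, (eB b : ℂ) = f b)) ∧
    (f c ∈ K → IsConnected (f ⁻¹' K) ∧ c ∈ f ⁻¹' K) := by
  constructor
  · -- case f c ∉ K
    intro hvK
    set X := f ⁻¹' K with hX
    have hXcomp : IsCompact X := hperfect K hK.1
    have hXclosed : IsClosed X := hXcomp.isClosed
    have hXτ : ∀ z ∈ X, τ z ∈ X := by
      intro z hz
      simp only [hX, mem_preimage, hfτ]
      exact hz
    have hcX : c ∉ X := hvK
    -- surjectivity of f
    have hfsurj : Function.Surjective f := by
      have hproper : IsProperMap f :=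
        isProperMap_iff_isCompact_preimage.mpr ⟨hf, fun K hK => hperfect K hK⟩
      have hcl : IsClosed (range f) := hproper.isClosedMap.isClosed_range
      have hop : IsOpen (range f) := hopen.isOpen_range
      have huniv : range f = univ := (IsClopen.eq_univ ⟨hcl, hop⟩) (range_nonempty f)
      rw [← range_eq_univ]; exact huniv
    obtain ⟨k₀, hk₀⟩ := hK.2.nonempty
    obtain ⟨x₀, hx₀⟩ := hfsurj k₀
    have hx₀X : x₀ ∈ X := by simp only [hX, mem_preimage, hx₀]; exact hk₀
    have hτx₀X : τ x₀ ∈ X := hXτ _ hx₀X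
    set A := connectedComponentIn X x₀ with hA
    set B := connectedComponentIn X (τ x₀) with hB
    have hAcomp : IsComponentOf A X := ⟨x₀, hx₀X, rfl⟩
    have hBcomp : IsComponentOf B X := ⟨τ x₀, hτx₀X, rfl⟩
    have hτA : τ '' A = B := tau_image_component τ hτ hττ X hXτ x₀ hx₀X
    have hτB : τ '' B = A := by
      rw [← hτA, image_image]
      have h4 : (fun a => τ (τ a)) = id := funext fun a => hττ a
      rw [h4, image_id]
    have hfA : f '' A = K := hconf K A hK hAcomp
    have hfB : f '' B = K := hconf K B hK hBcomp
    have hx₀A : x₀ ∈ A := mem_connectedComponentIn hx₀X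
    -- A ≠ B via the crux lemma
    have hABne : A ≠ B := by
      intro hAB
      have hτAA : ∀ z ∈ A, τ z ∈ A := by
        intro z hz
        have h1 : τ z ∈ τ '' A := mem_image_of_mem _ hz
        rw [hτA, ← hAB] at h1
        exact h1
      have hAconn : IsConnected A := isConnected_connectedComponentIn_iff.mpr hx₀X
      have hAcpt : IsCompact A := comp_compact hXcomp x₀
      have hAX : A ⊆ X := connectedComponentIn_subset X x₀
      have hcA : c ∉ A := fun h => hcX (hAX h)
      -- the complement of X is open, connected, path-connected
      have hUopen : IsOpen Kᶜ := hK.1.isClosed.isOpen_compl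
      have hWconn' : IsConnected (f ⁻¹' Kᶜ) :=
        preimage_open_connected f τ c hf hopen hperfect hfib hc Kᶜ hUopen hKns hvK
      have hWX : f ⁻¹' Kᶜ = Xᶜ := by rw [hX, preimage_compl]
      have hWconn : IsConnected Xᶜ := hWX ▸ hWconn'
      have hWopen : IsOpen Xᶜ := hXclosed.isOpen_compl
      have hcW : c ∈ Xᶜ := hcX
      -- bounding radius
      obtain ⟨r0, hr0⟩ := hXcomp.isBounded.subset_closedBall 0
      set r : ℝ := max r0 0 with hr
      have hrnn : 0 ≤ r := le_max_right _ _
      have hXball : X ⊆ Metric.closedBall 0 r :=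
        hr0.trans (Metric.closedBall_subset_closedBall (le_max_left _ _))
      have hXnorm : ∀ z ∈ X, ‖z‖ ≤ r := by
        intro z hz
        have := hXball hz
        rwa [Metric.mem_closedBall, dist_zero_right] at this
      set w₀ : ℂ := ((r + 2 : ℝ) : ℂ) with hw₀
      have hw₀norm : ‖w₀‖ = r + 2 := by
        rw [hw₀, Complex.norm_real]
        exact Real.norm_of_nonneg (by linarith)
      have hw₀W : w₀ ∈ Xᶜ := by
        intro h
        have := hXnorm _ h
        rw [hw₀norm] at this
        linarith
      -- path from c to w₀ avoiding X
      have hWpath : IsPathConnected Xᶜ := (hWopen.isConnected_iff_isPathConnected).mp hWconn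
      have hjoin : JoinedIn Xᶜ c w₀ := hWpath.joinedIn c hcW w₀ hw₀W
      set p := hjoin.somePath with hp
      set S : Set ℂ := p.extend '' (Icc (0:ℝ) 1) with hS
      have hScomp : IsCompact S := isCompact_Icc.image p.continuous_extend
      have hSX : Disjoint X S := by
        rw [disjoint_right]
        rintro z ⟨u, hu, rfl⟩ hzX
        have : p.extend u ∈ Xᶜ := by
          rw [Path.extend_apply _ hu]
          exact hjoin.somePath_mem _
        exact this hzX
      obtain ⟨δ, hδpos, hdisj⟩ := hSX.exists_thickenings hXcomp hScomp.isClosed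
      set ε : ℝ := min δ 1 with hε
      have hεpos : 0 < ε := lt_min hδpos one_pos
      have hε1 : ε ≤ 1 := min_le_right _ _
      have hεδ : ε ≤ δ := min_le_left _ _
      -- the symmetric connected open neighborhood G of A
      set Gε : Set ℂ := Metric.thickening ε A ∩ τ ⁻¹' (Metric.thickening ε A) ∩ {c}ᶜ with hGε
      have hGεopen : IsOpen Gε :=
        ((Metric.isOpen_thickening).inter (Metric.isOpen_thickening.preimage hτ)).inter
          isOpen_compl_singleton
      have hAGε : A ⊆ Gε := by
        intro a ha
        refine ⟨⟨Metric.self_subset_thickening hεpos A ha, ?_⟩, ?_⟩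
        · exact Metric.self_subset_thickening hεpos A (hτAA a ha)
        · intro h
          rw [mem_singleton_iff] at h
          exact hcA (h ▸ ha)
      have hx₀Gε : x₀ ∈ Gε := hAGε hx₀A
      set G := connectedComponentIn Gε x₀ with hG
      have hAG : A ⊆ G := hAconn.isPreconnected.subset_connectedComponentIn hx₀A hAGε
      have hGopen : IsOpen G := hGεopen.connectedComponentIn
      have hGconn : IsConnected G := isConnected_connectedComponentIn_iff.mpr hx₀Gε
      have hGsub : G ⊆ Gε := connectedComponentIn_subset _ _
      have hτGε : ∀ z ∈ Gε, τ z ∈ Gε := by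
        rintro z ⟨⟨hz1, hz2⟩, hz3⟩
        refine ⟨⟨hz2, ?_⟩, ?_⟩
        · rw [mem_preimage, hττ]; exact hz1
        · intro h
          rw [mem_singleton_iff] at h
          apply hz3
          rw [mem_singleton_iff, ← hττ z, h, hc]
      have hGτ : ∀ z ∈ G, τ z ∈ G := by
        intro z hz
        have h1 : τ '' G ⊆ connectedComponentIn Gε (τ x₀) := by
          apply IsPreconnected.subset_connectedComponentIn
          · exact (isPreconnected_connectedComponentIn).image τ hτ.continuousOn
          · exact mem_image_of_mem τ (mem_connectedComponentIn hx₀Gε)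
          · rintro y ⟨u, hu, rfl⟩
            exact hτGε u (hGsub hu)
        have h2 : connectedComponentIn Gε (τ x₀) = G := by
          rw [hG]
          exact (connectedComponentIn_eq (hAG (hτAA x₀ hx₀A))).symm
        rw [h2] at h1
        exact h1 (mem_image_of_mem τ hz)
      have hcG : c ∉ G := fun h => (hGsub h).2 rfl
      -- G is within ε of A
      have hGnear : ∀ z ∈ G, ∃ a ∈ A, dist z a < ε := by
        intro z hz
        have : z ∈ Metric.thickening ε A := (hGsub hz).1.1
        rwa [Metric.mem_thickening_iff] at this
      set ρ : ℝ := r + 3/2 with hρ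
      have hGρ : ∀ z ∈ G, ‖z‖ < ρ := by
        intro z hz
        obtain ⟨a, haA, hd⟩ := hGnear z hz
        have h1 : ‖a‖ ≤ r := hXnorm a (hAX haA)
        have h2 : ‖z - a‖ < ε := by rwa [← dist_eq_norm]
        calc ‖z‖ = ‖z - a + a‖ := by ring_nf
        _ ≤ ‖z - a‖ + ‖a‖ := norm_add_le _ _
        _ < ε + r := by linarith
        _ ≤ ρ := by rw [hρ]; linarith
      -- the path avoids G
      have hGthX : G ⊆ Metric.thickening δ X := by
        intro z hz
        obtain ⟨a, haA, hd⟩ := hGnear z hz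
        rw [Metric.mem_thickening_iff]
        exact ⟨a, hAX haA, hd.trans_le hεδ⟩
      set γ : ℝ → ℂ := ⇑p.extend with hγdef
      have hγcont : Continuous γ := p.continuous_extend
      have hγcl : ∀ t, γ t = γ (cl t) := fun t => path_extend_cl p t
      have hγ0 : γ 0 = c := p.extend_zero
      have hγ1 : ρ < ‖γ 1‖ := by
        have : γ 1 = w₀ := p.extend_one
        rw [this, hw₀norm, hρ]
        linarith
      have hγG : ∀ t, γ t ∉ G := by
        intro t hmem
        have h1 : γ t ∈ S := by
          rw [hγcl t, hS]
          exact mem_image_of_mem _ (cl_mem t)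
        have h2 : γ t ∈ Metric.thickening δ S := Metric.self_subset_thickening hδpos S h1
        have h3 : γ t ∈ Metric.thickening δ X := hGthX hmem
        exact (disjoint_left.mp hdisj h3) h2
      exact crux τ c hτ hττ hcuniq G hGopen hGconn hGτ hcG x₀ (hAG hx₀A) ρ hGρ
        γ hγcont hγcl hγ0 hγ1 hγG
    -- disjointness
    have hdisjAB : Disjoint A B := by
      rw [Set.disjoint_left]
      intro y hyA hyB
      apply hABne
      rw [hA, hB, connectedComponentIn_eq hyA, connectedComponentIn_eq hyB]
    -- union
    have hunion : A ∪ B = X := by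
      apply Subset.antisymm
      · exact union_subset (connectedComponentIn_subset _ _) (connectedComponentIn_subset _ _)
      · intro z hz
        have hzcomp : IsComponentOf (connectedComponentIn X z) X := ⟨z, hz, rfl⟩
        have hfz : f '' connectedComponentIn X z = K := hconf K _ hK hzcomp
        have : k₀ ∈ f '' connectedComponentIn X z := hfz.symm ▸ hk₀
        obtain ⟨q, hq, hqk⟩ := this
        have hfq : f x₀ = f q := by rw [hx₀, hqk]
        rcases hfib x₀ q hfq with h | h
        · left
          rw [hA, ← connectedComponentIn_eq (h ▸ hq : x₀ ∈ connectedComponentIn X z)]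
          exact mem_connectedComponentIn hz
        · right
          rw [hB, ← connectedComponentIn_eq (h ▸ hq : τ x₀ ∈ connectedComponentIn X z)]
          exact mem_connectedComponentIn hz
    -- injectivity of f on A and B
    have hinj : ∀ C D : Set ℂ, Disjoint C D → τ '' C = D → InjOn f C := by
      intro C D hCD hτC a haC b hbC hab
      rcases hfib a b hab with h | h
      · exact h.symm
      · exfalso
        have hbD : b ∈ D := by
          rw [← hτC, h]
          exact mem_image_of_mem τ haC
        exact (disjoint_left.mp hCD hbC) hbD
    have hinjA : InjOn f A := hinj A B hdisjAB hτA
    have hinjB : InjOn f B := hinj B A hdisjAB.symm hτB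
    obtain ⟨eA, heA⟩ := build_homeo f hf A K (comp_compact hXcomp x₀) hfA hinjA
    obtain ⟨eB, heB⟩ := build_homeo f hf B K (comp_compact hXcomp (τ x₀)) hfB hinjB
    exact ⟨A, B, hAcomp, hBcomp, hABne, hdisjAB, hunion, ⟨eA, heA⟩, ⟨eB, heB⟩⟩
  · -- case f c ∈ K
    intro hvK
    have hcX : c ∈ f ⁻¹' K := hvK
    have hkey : ∀ z ∈ f ⁻¹' K, c ∈ connectedComponentIn (f ⁻¹' K) z := by
      intro z hz
      have hcomp : IsComponentOf (connectedComponentIn (f ⁻¹' K) z) (f ⁻¹' K) := ⟨z, hz, rfl⟩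
      have hfz : f '' connectedComponentIn (f ⁻¹' K) z = K := hconf K _ hK hcomp
      have : f c ∈ f '' connectedComponentIn (f ⁻¹' K) z := hfz.symm ▸ hvK
      obtain ⟨q, hq, hqv⟩ := this
      rcases hfib c q hqv.symm with h | h
      · exact h ▸ hq
      · rw [hc] at h
        exact h ▸ hq
    constructor
    · have hXeq : f ⁻¹' K = connectedComponentIn (f ⁻¹' K) c := by
        apply Subset.antisymm
        · intro z hz
          rw [← connectedComponentIn_eq (hkey z hz)]
          exact mem_connectedComponentIn hz
        · exact connectedComponentIn_subset _ _
      constructor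
      · exact ⟨c, hcX⟩
      · rw [hXeq]
        exact isPreconnected_connectedComponentIn
    · exact hcX
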